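/- Let n ≥ 1, let ρ := 1 − α d_min(1−γ), and let A be an n×n real matrix with ‖A‖_∞ ≤ ρ. Let (Ω, μ) be a probability space, x₀ ∈ ℝⁿ a fixed vector, and (x_k)_{k≥0}, (w_k)_{k≥0} sequences of square-integrable random vectors in ℝⁿ such that x_0 equals the fixed vector x₀ almost surely, x_{k+1} = A x_k + α w_k almost surely for all k, E[x_k(i)·w_k(j)] = 0 for all indices i, j and all k, and E[‖w_k‖₂²] ≤ 9/(1−γ)² for all k. Then for every k ≥ 0, E[‖x_k‖₂] ≤ 3 α^{1/2} n / (d_min^{1/2} (1−γ)^{3/2}) + n ‖x₀‖₂ ρ^k. -/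

import Mathlib

open MeasureTheory Matrix

section Aux
variable {Ω : Type*} [MeasurableSpace Ω] {μ : Measure Ω}

lemma aux_integrable_mul {f g : Ω → ℝ} (hf : MemLp f 2 μ) (hg : MemLp g 2 μ) :
    Integrable (fun ω => f ω * g ω) μ := by
  have h1 : Integrable (fun ω => ((f ω + g ω) ^ 2 - f ω ^ 2 - g ω ^ 2) * (1 / 2)) μ :=
    (((hf.add hg).integrable_sq.sub hf.integrable_sq).sub hg.integrable_sq).mul_const _
  have he : (fun ω => f ω * g ω) = fun ω => ((f ω + g ω) ^ 2 - f ω ^ 2 - g ω ^ 2) * (1 / 2) := by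
    funext ω; ring
  rw [he]; exact h1

lemma aux_cs {f g : Ω → ℝ} (hf : MemLp f 2 μ) (hg : MemLp g 2 μ) :
    |∫ ω, f ω * g ω ∂μ| ≤ Real.sqrt (∫ ω, f ω ^ 2 ∂μ) * Real.sqrt (∫ ω, g ω ^ 2 ∂μ) := by
  have h2 : ENNReal.ofReal (2 : ℝ) = 2 := by norm_num
  have hconj : Real.HolderConjugate 2 2 := by rw [Real.holderConjugate_iff]; norm_num
  have hH := integral_mul_le_Lp_mul_Lq_of_nonneg (μ := μ) hconj
    (f := fun ω => |f ω|) (g := fun ω => |g ω|)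
    (Filter.Eventually.of_forall fun ω => abs_nonneg _)
    (Filter.Eventually.of_forall fun ω => abs_nonneg _)
    (by rw [h2]; exact hf.abs) (by rw [h2]; exact hg.abs)
  have h1 : |∫ ω, f ω * g ω ∂μ| ≤ ∫ ω, |f ω| * |g ω| ∂μ := by
    calc |∫ ω, f ω * g ω ∂μ| ≤ ∫ ω, ‖f ω * g ω‖ ∂μ :=
          (Real.norm_eq_abs _ ▸ norm_integral_le_integral_norm _)
    _ = ∫ ω, |f ω| * |g ω| ∂μ := by simp [Real.norm_eq_abs, abs_mul]
  refine h1.trans (hH.trans_eq ?_)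
  have hf2 : ∀ (h : Ω → ℝ), (fun ω => |h ω| ^ (2 : ℝ)) = fun ω => h ω ^ 2 := by
    intro h; funext ω
    rw [show ((2:ℝ)) = ((2:ℕ):ℝ) by norm_num, Real.rpow_natCast, sq_abs]
  rw [show ∫ ω, |f ω| ^ (2:ℝ) ∂μ = ∫ ω, f ω ^ 2 ∂μ by rw [hf2],
    show ∫ ω, |g ω| ^ (2:ℝ) ∂μ = ∫ ω, g ω ^ 2 ∂μ by rw [hf2],
    Real.sqrt_eq_rpow, Real.sqrt_eq_rpow]

lemma aux_sqrt_add (a b : ℝ) (ha : 0 ≤ a) (hb : 0 ≤ b) :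
    Real.sqrt (a + b) ≤ Real.sqrt a + Real.sqrt b := by
  rw [show a + b = Real.sqrt a ^ 2 + Real.sqrt b ^ 2 by
    rw [Real.sq_sqrt ha, Real.sq_sqrt hb]]
  refine (Real.sqrt_le_sqrt ?_).trans_eq (Real.sqrt_sq (by positivity))
  nlinarith [Real.sqrt_nonneg a, Real.sqrt_nonneg b]

end Aux

/-- Finite-time bound for the lower comparison system. If `‖A‖_∞ ≤ ρ :=
1 − α d_min(1−γ)`, `x_0 = x₀` a.s., `x_{k+1} = A x_k + α w_k` a.s., the noise is
uncorrelated with the state (`E[x_k(i) w_k(j)] = 0`) and `E[‖w_k‖₂²] ≤ 9/(1−γ)²`, then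
`E[‖x_k‖₂] ≤ 3 α^{1/2} n / (d_min^{1/2} (1−γ)^{3/2}) + n ‖x₀‖₂ ρ^k` for all `k`. -/
theorem lower_comparison_system_finite_time_bound
    (n : ℕ) (hn : 1 ≤ n)
    (α γ dmin : ℝ) (hα : 0 < α ∧ α < 1) (hγ : 0 ≤ γ ∧ γ < 1) (hd : 0 < dmin ∧ dmin ≤ 1)
    {Ω : Type*} [MeasurableSpace Ω] (μ : Measure Ω) [IsProbabilityMeasure μ]
    (A : Matrix (Fin n) (Fin n) ℝ)
    (hA : (⨆ i, ∑ j, |A i j|) ≤ 1 - α * dmin * (1 - γ))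
    (x₀ : Fin n → ℝ)
    (x w : ℕ → Ω → Fin n → ℝ)
    (hxL2 : ∀ k i, MemLp (fun ω => x k ω i) 2 μ)
    (hwL2 : ∀ k i, MemLp (fun ω => w k ω i) 2 μ)
    (hx0 : ∀ᵐ ω ∂μ, x 0 ω = x₀)
    (hrec : ∀ k, ∀ᵐ ω ∂μ, x (k + 1) ω = A.mulVec (x k ω) + α • w k ω)
    (horth : ∀ k i j, ∫ ω, x k ω i * w k ω j ∂μ = 0)
    (hwbound : ∀ k, ∫ ω, ∑ i, (w k ω i) ^ 2 ∂μ ≤ 9 / (1 - γ) ^ 2) :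
    ∀ k, ∫ ω, Real.sqrt (∑ i, (x k ω i) ^ 2) ∂μ ≤
      3 * Real.sqrt α * n / (Real.sqrt dmin * (1 - γ) ^ ((3 : ℝ) / 2)) +
        n * Real.sqrt (∑ i, x₀ i ^ 2) * (1 - α * dmin * (1 - γ)) ^ k := by
  obtain ⟨hα0, hα1⟩ := hα
  obtain ⟨hγ0, hγ1⟩ := hγ
  obtain ⟨hd0, hd1⟩ := hd
  have h1γ : 0 < 1 - γ := by linarith
  set ρ : ℝ := 1 - α * dmin * (1 - γ) with hρdef
  have hdg : dmin * (1 - γ) ≤ 1 := by nlinarith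
  have hadg : α * dmin * (1 - γ) ≤ α := by nlinarith [mul_le_mul_of_nonneg_left hdg hα0.le]
  have hadg0 : 0 < α * dmin * (1 - γ) := by positivity
  have hρ0 : 0 ≤ ρ := by rw [hρdef]; linarith
  have hρ1 : ρ < 1 := by rw [hρdef]; linarith
  set B : ℝ := ∑ i, x₀ i ^ 2 with hBdef
  have hB0 : 0 ≤ B := Finset.sum_nonneg fun i _ => sq_nonneg _
  set C : ℝ := 9 * α / (dmin * (1 - γ) ^ 3) with hCdef
  have hC0 : 0 ≤ C := by positivity
  have hrow : ∀ i : Fin n, ∑ j, |A i j| ≤ ρ := by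
    intro i
    exact (le_ciSup (Set.Finite.bddAbove (Set.finite_range _)) i).trans hA
  have hw2 : ∀ k i, ∫ ω, (w k ω i) ^ 2 ∂μ ≤ 9 / (1 - γ) ^ 2 := by
    intro k i
    refine le_trans ?_ (hwbound k)
    refine integral_mono ((hwL2 k i).integrable_sq)
      (integrable_finset_sum _ fun j _ => (hwL2 k j).integrable_sq) ?_
    intro ω
    exact Finset.single_le_sum (f := fun j => w k ω j ^ 2) (fun j _ => sq_nonneg _)
      (Finset.mem_univ i)
  -- key second-moment induction
  have key : ∀ k, ∀ i, ∫ ω, (x k ω i) ^ 2 ∂μ ≤ (ρ ^ k) ^ 2 * B + C := by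
    intro k
    induction k with
    | zero =>
      intro i
      have he : ∫ ω, (x 0 ω i) ^ 2 ∂μ = x₀ i ^ 2 := by
        rw [show x₀ i ^ 2 = ∫ _ω, x₀ i ^ 2 ∂μ by simp]
        exact integral_congr_ae (hx0.mono fun ω hω =>
          show x 0 ω i ^ 2 = x₀ i ^ 2 by rw [hω])
      have hle : x₀ i ^ 2 ≤ B := by
        rw [hBdef]
        exact Finset.single_le_sum (f := fun j => x₀ j ^ 2) (fun j _ => sq_nonneg _)
          (Finset.mem_univ i)
      rw [he]
      simpa using by linarith
    | succ k ih =>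
      intro i
      set S : Ω → ℝ := fun ω => ∑ j, A i j * x k ω j with hSdef
      have hSL2 : MemLp S 2 μ := memLp_finset_sum _ fun j _ => (hxL2 k j).const_mul (A i j)
      have hwi : MemLp (fun ω => w k ω i) 2 μ := hwL2 k i
      have hintj : ∀ j : Fin n, Integrable (fun ω => A i j * (x k ω j * w k ω i)) μ :=
        fun j => (aux_integrable_mul (hxL2 k j) hwi).const_mul _
      have hint2 : Integrable
          (fun ω => (2 * α) * ∑ j, A i j * (x k ω j * w k ω i)) μ :=
        (integrable_finset_sum _ fun j _ => hintj j).const_mul _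
      have hint3 : Integrable (fun ω => α ^ 2 * (w k ω i) ^ 2) μ :=
        hwi.integrable_sq.const_mul _
      have hint12 : Integrable
          (fun ω => S ω ^ 2 + (2 * α) * ∑ j, A i j * (x k ω j * w k ω i)) μ :=
        hSL2.integrable_sq.add hint2
      have heq : ∫ ω, (x (k + 1) ω i) ^ 2 ∂μ
          = ∫ ω, S ω ^ 2 ∂μ + (2 * α) * ∑ j, A i j * ∫ ω, x k ω j * w k ω i ∂μ
            + α ^ 2 * ∫ ω, (w k ω i) ^ 2 ∂μ := by
        have h1 : ∫ ω, (x (k + 1) ω i) ^ 2 ∂μ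
            = ∫ ω, (S ω ^ 2 + (2 * α) * (∑ j, A i j * (x k ω j * w k ω i))
                + α ^ 2 * (w k ω i) ^ 2) ∂μ := by
          refine integral_congr_ae ((hrec k).mono fun ω hω => ?_)
          have h2 : x (k + 1) ω i = S ω + α * w k ω i := by
            rw [hω]; simp [hSdef, Matrix.mulVec, dotProduct]
          have h3 : (∑ j, A i j * (x k ω j * w k ω i)) = S ω * w k ω i := by
            simp [hSdef, Finset.sum_mul, mul_assoc]
          show x (k + 1) ω i ^ 2
            = S ω ^ 2 + (2 * α) * (∑ j, A i j * (x k ω j * w k ω i))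
              + α ^ 2 * (w k ω i) ^ 2
          rw [h2, h3]; ring
        rw [h1, integral_add hint12 hint3,
          integral_add hSL2.integrable_sq hint2,
          integral_const_mul, integral_const_mul,
          integral_finset_sum _ fun j _ => hintj j]
        simp only [integral_const_mul]
      have horth0 : (∑ j, A i j * ∫ ω, x k ω j * w k ω i ∂μ) = 0 := by
        simp [horth k]
      set M : ℝ := (ρ ^ k) ^ 2 * B + C with hMdef
      have hM0 : 0 ≤ M := by positivity
      set m : Fin n → ℝ := fun j => Real.sqrt (∫ ω, (x k ω j) ^ 2 ∂μ) with hmdef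
      have hS2 : ∫ ω, S ω ^ 2 ∂μ ≤ (∑ j, |A i j| * m j) ^ 2 := by
        have hie : ∫ ω, S ω ^ 2 ∂μ
            = ∑ j, ∑ l, A i j * A i l * ∫ ω, x k ω j * x k ω l ∂μ := by
          have hexp : (fun ω => S ω ^ 2)
              = fun ω => ∑ j, ∑ l, A i j * A i l * (x k ω j * x k ω l) := by
            funext ω
            rw [hSdef, sq, Finset.sum_mul_sum]
            exact Finset.sum_congr rfl fun j _ => Finset.sum_congr rfl fun l _ => by ring
          rw [hexp, integral_finset_sum _ fun j _ =>
            integrable_finset_sum _ fun l _ =>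
              (aux_integrable_mul (hxL2 k j) (hxL2 k l)).const_mul _]
          refine Finset.sum_congr rfl fun j _ => ?_
          rw [integral_finset_sum _ fun l _ =>
            (aux_integrable_mul (hxL2 k j) (hxL2 k l)).const_mul _]
          exact Finset.sum_congr rfl fun l _ => integral_const_mul _ _
        rw [hie, sq, Finset.sum_mul_sum]
        refine Finset.sum_le_sum fun j _ => Finset.sum_le_sum fun l _ => ?_
        have hcs := aux_cs (hxL2 k j) (hxL2 k l)
        calc A i j * A i l * ∫ ω, x k ω j * x k ω l ∂μ
            ≤ |A i j * A i l * ∫ ω, x k ω j * x k ω l ∂μ| := le_abs_self _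
          _ = |A i j| * |A i l| * |∫ ω, x k ω j * x k ω l ∂μ| := by
              rw [abs_mul, abs_mul]
          _ ≤ |A i j| * |A i l| * (m j * m l) := by
              refine mul_le_mul_of_nonneg_left hcs (by positivity)
          _ = |A i j| * m j * (|A i l| * m l) := by ring
      have hsum : ∑ j, |A i j| * m j ≤ ρ * Real.sqrt M := by
        calc ∑ j, |A i j| * m j
            ≤ ∑ j, |A i j| * Real.sqrt M := by
              refine Finset.sum_le_sum fun j _ => ?_
              exact mul_le_mul_of_nonneg_left (Real.sqrt_le_sqrt (ih j)) (abs_nonneg _)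
          _ = (∑ j, |A i j|) * Real.sqrt M := (Finset.sum_mul _ _ _).symm
          _ ≤ ρ * Real.sqrt M :=
              mul_le_mul_of_nonneg_right (hrow i) (Real.sqrt_nonneg _)
      have hS2' : ∫ ω, S ω ^ 2 ∂μ ≤ ρ ^ 2 * M := by
        refine hS2.trans ?_
        have h0 : 0 ≤ ∑ j, |A i j| * m j :=
          Finset.sum_nonneg fun j _ => mul_nonneg (abs_nonneg _) (Real.sqrt_nonneg _)
        calc (∑ j, |A i j| * m j) ^ 2 ≤ (ρ * Real.sqrt M) ^ 2 := by
              exact pow_le_pow_left₀ h0 hsum 2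
          _ = ρ ^ 2 * M := by rw [mul_pow, Real.sq_sqrt hM0]
      have hCkey : α ^ 2 * (9 / (1 - γ) ^ 2) = (1 - ρ) * C := by
        rw [hCdef, hρdef]
        field_simp
        ring
      have hfinal : ρ ^ 2 * M + α ^ 2 * (9 / (1 - γ) ^ 2) ≤ (ρ ^ (k + 1)) ^ 2 * B + C := by
        have h1 : (ρ ^ (k + 1)) ^ 2 * B = ρ ^ 2 * ((ρ ^ k) ^ 2 * B) := by ring
        rw [h1, hMdef, hCkey]
        nlinarith [mul_nonneg (mul_nonneg hρ0 hC0) (by linarith : (0:ℝ) ≤ 1 - ρ)]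
      calc ∫ ω, (x (k + 1) ω i) ^ 2 ∂μ
          = ∫ ω, S ω ^ 2 ∂μ + α ^ 2 * ∫ ω, (w k ω i) ^ 2 ∂μ := by
            rw [heq, horth0]; ring
        _ ≤ ρ ^ 2 * M + α ^ 2 * (9 / (1 - γ) ^ 2) := by
            refine add_le_add hS2' ?_
            exact mul_le_mul_of_nonneg_left (hw2 k i) (by positivity)
        _ ≤ (ρ ^ (k + 1)) ^ 2 * B + C := hfinal
  -- conclude
  intro k
  set Y : Ω → ℝ := fun ω => ∑ i, (x k ω i) ^ 2 with hYdef
  have hYint : Integrable Y μ := integrable_finset_sum _ fun i _ => (hxL2 k i).integrable_sq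
  have hYnn : ∀ ω, 0 ≤ Y ω := fun ω => Finset.sum_nonneg fun i _ => sq_nonneg _
  have hmeas : AEStronglyMeasurable (fun ω => Real.sqrt (Y ω)) μ :=
    Real.continuous_sqrt.comp_aestronglyMeasurable hYint.aestronglyMeasurable
  have hsqL2 : MemLp (fun ω => Real.sqrt (Y ω)) 2 μ := by
    rw [memLp_two_iff_integrable_sq hmeas]
    have he : (fun ω => Real.sqrt (Y ω) ^ 2) = Y := funext fun ω => Real.sq_sqrt (hYnn ω)
    rw [he]; exact hYint
  have hcs := aux_cs hsqL2 (memLp_const (1 : ℝ))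
  simp only [mul_one, one_pow] at hcs
  have hsq2 : ∫ ω, Real.sqrt (Y ω) ^ 2 ∂μ = ∫ ω, Y ω ∂μ :=
    integral_congr_ae (Filter.Eventually.of_forall fun ω => Real.sq_sqrt (hYnn ω))
  have hone : ∫ _ω : Ω, (1 : ℝ) ∂μ = 1 := by simp
  rw [hsq2, hone, Real.sqrt_one, mul_one] at hcs
  have hYb : ∫ ω, Y ω ∂μ ≤ n * ((ρ ^ k) ^ 2 * B + C) := by
    rw [hYdef]
    rw [integral_finset_sum _ fun i _ => (hxL2 k i).integrable_sq]
    calc ∑ i : Fin n, ∫ ω, (x k ω i) ^ 2 ∂μ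
        ≤ ∑ _i : Fin n, ((ρ ^ k) ^ 2 * B + C) := Finset.sum_le_sum fun i _ => key k i
      _ = n * ((ρ ^ k) ^ 2 * B + C) := by
          rw [Finset.sum_const, Finset.card_univ, Fintype.card_fin, nsmul_eq_mul]
  have hM0 : (0:ℝ) ≤ (ρ ^ k) ^ 2 * B + C := by positivity
  have hn0 : (0:ℝ) ≤ (n:ℝ) := Nat.cast_nonneg n
  have hchain : ∫ ω, Real.sqrt (Y ω) ∂μ
      ≤ Real.sqrt n * (ρ ^ k * Real.sqrt B + Real.sqrt C) := by
    refine (le_abs_self _).trans (hcs.trans ?_)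
    calc Real.sqrt (∫ ω, Y ω ∂μ) ≤ Real.sqrt (n * ((ρ ^ k) ^ 2 * B + C)) :=
          Real.sqrt_le_sqrt hYb
      _ = Real.sqrt n * Real.sqrt ((ρ ^ k) ^ 2 * B + C) := Real.sqrt_mul hn0 _
      _ ≤ Real.sqrt n * (Real.sqrt ((ρ ^ k) ^ 2 * B) + Real.sqrt C) := by
          refine mul_le_mul_of_nonneg_left (aux_sqrt_add _ _ (by positivity) hC0)
            (Real.sqrt_nonneg _)
      _ = Real.sqrt n * (ρ ^ k * Real.sqrt B + Real.sqrt C) := by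
          rw [Real.sqrt_mul (sq_nonneg _), Real.sqrt_sq (by positivity)]
  have hn1 : (1:ℝ) ≤ (n:ℝ) := by exact_mod_cast hn
  have hsn : Real.sqrt n ≤ n := by
    have h := Real.sqrt_le_sqrt (le_self_pow₀ hn1 (two_ne_zero))
    rwa [Real.sqrt_sq hn0] at h
  have hsqC : Real.sqrt C = 3 * Real.sqrt α / (Real.sqrt dmin * (1 - γ) ^ ((3:ℝ)/2)) := by
    rw [hCdef, Real.sqrt_div (by positivity), Real.sqrt_mul (by norm_num : (0:ℝ) ≤ 9),
      show Real.sqrt 9 = 3 by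
        rw [show (9:ℝ) = 3 ^ 2 by norm_num, Real.sqrt_sq (by norm_num : (0:ℝ) ≤ 3)],
      Real.sqrt_mul hd0.le]
    congr 2
    rw [show ((1 - γ) ^ 3 : ℝ) = (1 - γ) ^ ((3:ℕ):ℝ) from
      (Real.rpow_natCast _ 3).symm, Real.sqrt_eq_rpow, ← Real.rpow_mul h1γ.le,
      show ((3:ℕ):ℝ) * (1/2) = (3:ℝ)/2 by norm_num]
  refine hchain.trans ?_
  have h1 : Real.sqrt n * (ρ ^ k * Real.sqrt B + Real.sqrt C)
      ≤ n * (ρ ^ k * Real.sqrt B + Real.sqrt C) :=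
    mul_le_mul_of_nonneg_right hsn (by positivity)
  refine h1.trans (le_of_eq ?_)
  rw [hsqC]; ring
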